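/- Let X, Y, W be real numbers and W' = π − W. Then sin X · sin(W'/2) · sin(Y/2) · sin((Y − W')/2) + sin Y · sin(W/2) · sin(X/2) · sin((X − W)/2) + sin W · cos(X/2) · cos(Y/2) · sin((X + Y)/2) − 2 sin²(X/2) cos²(W/2) cos²(Y/2) − 2 cos²(X/2) cos²(W'/2) sin²(Y/2) = 2 sin((W' − Y)/2) sin((W − X)/2) sin((X + Y)/2). -/
import Mathlib

theorem stmt5 (X Y W : ℝ) (W' : ℝ) (hW' : W' = Real.pi - W) :
    Real.sin X * Real.sin (W' / 2) * Real.sin (Y / 2) * Real.sin ((Y - W') / 2)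
      + Real.sin Y * Real.sin (W / 2) * Real.sin (X / 2) * Real.sin ((X - W) / 2)
      + Real.sin W * Real.cos (X / 2) * Real.cos (Y / 2) * Real.sin ((X + Y) / 2)
      - 2 * Real.sin (X / 2) ^ 2 * Real.cos (W / 2) ^ 2 * Real.cos (Y / 2) ^ 2
      - 2 * Real.cos (X / 2) ^ 2 * Real.cos (W' / 2) ^ 2 * Real.sin (Y / 2) ^ 2
    = 2 * Real.sin ((W' - Y) / 2) * Real.sin ((W - X) / 2) * Real.sin ((X + Y) / 2) := by
  subst hW'
  have e1 : (Real.pi - W) / 2 = Real.pi / 2 - W / 2 := by ring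
  have e2 : (Y - (Real.pi - W)) / 2 = (Y/2 + W/2) - Real.pi/2 := by ring
  have e3 : ((Real.pi - W) - Y) / 2 = Real.pi/2 - (W/2 + Y/2) := by ring
  have hX : X = 2 * (X/2) := by ring
  have hY : Y = 2 * (Y/2) := by ring
  have hW : W = 2 * (W/2) := by ring
  rw [e1, e2, e3, Real.sin_pi_div_two_sub, Real.cos_pi_div_two_sub,
    Real.sin_pi_div_two_sub]
  rw [show Real.sin X = Real.sin (2*(X/2)) by rw [← hX],
    show Real.sin Y = Real.sin (2*(Y/2)) by rw [← hY],
    show Real.sin W = Real.sin (2*(W/2)) by rw [← hW]]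
  rw [show (X - W)/2 = X/2 - W/2 by ring, show (X+Y)/2 = X/2 + Y/2 by ring, show (W - X)/2 = W/2 - X/2 by ring]
  simp only [Real.sin_two_mul, Real.sin_add, Real.cos_add, Real.sin_sub, Real.cos_sub, Real.cos_pi_div_two, Real.sin_pi_div_two]
  have px := Real.sin_sq_add_cos_sq (X/2)
  have py := Real.sin_sq_add_cos_sq (Y/2)
  have pw := Real.sin_sq_add_cos_sq (W/2)
  nlinarith [px, py, pw, sq_nonneg (Real.sin (X/2)), sq_nonneg (Real.cos (W/2))]
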